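/- Let G be the graph consisting of an even cycle C = v_1 ... v_k (k ≥ 4 even) together with: for each v_i, 3 ≤ i ≤ k, a triangle complete to v_i; a triangle complete to v_1 and a triangle complete to v_2; and two adjacent vertices s, s' each adjacent to both v_1 and v_2; all these attachment sets pairwise anticomplete. Then G is not a contact B0-VPG graph. -/

import Mathlib

/-- An axis-parallel nontrivial segment on the grid: `horiz` tells its direction,
`coord` is the fixed coordinate (the `y`-coordinate if horizontal, the `x`-coordinate
if vertical) and `[lo, hi]` (with `lo < hi`, i.e. the segment is nontrivial) is the
interval spanned by the varying coordinate. -/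
structure GridSeg where
  horiz : Bool
  coord : ℤ
  lo : ℤ
  hi : ℤ
  lt : lo < hi

namespace GridSeg

/-- The set of points (in the real plane) of a grid segment. -/
def pts (s : GridSeg) : Set (ℝ × ℝ) :=
  if s.horiz then {p | p.2 = (s.coord : ℝ) ∧ (s.lo : ℝ) ≤ p.1 ∧ p.1 ≤ (s.hi : ℝ)}
  else {p | p.1 = (s.coord : ℝ) ∧ (s.lo : ℝ) ≤ p.2 ∧ p.2 ≤ (s.hi : ℝ)}

/-- The interior of a grid segment. -/
def interior (s : GridSeg) : Set (ℝ × ℝ) :=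
  if s.horiz then {p | p.2 = (s.coord : ℝ) ∧ (s.lo : ℝ) < p.1 ∧ p.1 < (s.hi : ℝ)}
  else {p | p.1 = (s.coord : ℝ) ∧ (s.lo : ℝ) < p.2 ∧ p.2 < (s.hi : ℝ)}

/-- The two endpoints of a grid segment. -/
def ends (s : GridSeg) : Set (ℝ × ℝ) :=
  if s.horiz then {((s.lo : ℝ), (s.coord : ℝ)), ((s.hi : ℝ), (s.coord : ℝ))}
  else {((s.coord : ℝ), (s.lo : ℝ)), ((s.coord : ℝ), (s.hi : ℝ))}

/-- Two segments touch if they share a point which is an endpoint of at least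
one of the two segments. -/
def Touch (s t : GridSeg) : Prop :=
  ∃ p : ℝ × ℝ, p ∈ s.pts ∧ p ∈ t.pts ∧ (p ∈ s.ends ∨ p ∈ t.ends)

end GridSeg

/-- `f` is a contact B₀-VPG representation of `G`: the segments of distinct vertices are
interiorly disjoint, and two distinct vertices are adjacent iff their segments touch. -/
def IsB0Rep {V : Type*} (G : SimpleGraph V) (f : V → GridSeg) : Prop :=
  (∀ v w : V, v ≠ w → Disjoint (GridSeg.interior (f v)) (GridSeg.interior (f w))) ∧
  (∀ v w : V, v ≠ w → (G.Adj v w ↔ GridSeg.Touch (f v) (f w)))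

/-- A graph is contact B₀-VPG if it admits a contact B₀-VPG representation. -/
def ContactB0VPG {V : Type*} (G : SimpleGraph V) : Prop :=
  ∃ f : V → GridSeg, IsB0Rep G f

/-- Cyclic shift: the element `i + m (mod k)` of `Fin k`. -/
def cycShift {k : ℕ} (i : Fin k) (m : ℕ) : Fin k :=
  i + ⟨m % k, Nat.mod_lt m (Nat.lt_of_le_of_lt (Nat.zero_le i.1) i.isLt)⟩

/-- `c` lists the vertices of an induced cycle (a hole, when `k ≥ 4`) of `G`, in cyclic
order: `c` is injective and two of its vertices are adjacent iff they are consecutive. -/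
def IsInducedCycle {V : Type*} (G : SimpleGraph V) {k : ℕ} (c : Fin k → V) : Prop :=
  Function.Injective c ∧
    ∀ i j : Fin k, G.Adj (c i) (c j) ↔ (i ≠ j ∧ (i = cycShift j 1 ∨ j = cycShift i 1))

/-- The graph made of a `k`-cycle `v_1 … v_k` together with, for each `i`, `t i` pairwise
anticomplete triangles complete to `v_i` (and anticomplete to the rest of the graph).
Vertices: `Sum.inl i` is the cycle vertex `v_i`; `Sum.inr ⟨i, a, x⟩` is the `x`-th vertex
of the `a`-th triangle attached to `v_i`. -/
def cycleWithTriangles (k : ℕ) (t : Fin k → ℕ) :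
    SimpleGraph (Fin k ⊕ Σ i : Fin k, Fin (t i) × Fin 3) where
  Adj a b :=
    match a, b with
    | Sum.inl i, Sum.inl j => i ≠ j ∧ (i = cycShift j 1 ∨ j = cycShift i 1)
    | Sum.inl i, Sum.inr x => i = x.1
    | Sum.inr x, Sum.inl i => i = x.1
    | Sum.inr x, Sum.inr y => x.1 = y.1 ∧ x.2.1.1 = y.2.1.1 ∧ x.2.2 ≠ y.2.2
  symm := by
    constructor
    rintro (i | x) (j | y) h
    · exact ⟨h.1.symm, h.2.symm⟩
    · exact h
    · exact h
    · exact ⟨h.1.symm, h.2.1.symm, h.2.2.symm⟩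
  loopless := by
    constructor
    rintro (i | x) h
    · exact h.1 rfl
    · exact h.2.2 rfl

/-- The family `F₅`: an even cycle `v_1 … v_k` where every cycle vertex carries one
triangle complete to it, together with two adjacent extra vertices `s, s'` (the set
`S₁`, given by `Sum.inr`), both adjacent to `v_1` and `v_2` (indices `0` and `1`);
all attachment sets pairwise anticomplete. -/
def F5graph (k : ℕ) :
    SimpleGraph ((Fin k ⊕ Σ i : Fin k, Fin 1 × Fin 3) ⊕ Fin 2) where
  Adj a b :=
    match a, b with
    | Sum.inl x, Sum.inl y => (cycleWithTriangles k (fun _ => 1)).Adj x y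
    | Sum.inl (Sum.inl i), Sum.inr _ => i.1 = 0 ∨ i.1 = 1
    | Sum.inr _, Sum.inl (Sum.inl i) => i.1 = 0 ∨ i.1 = 1
    | Sum.inr s, Sum.inr s' => s ≠ s'
    | _, _ => False
  symm := by
    constructor
    rintro ((i | u) | s) ((j | v) | s') h <;>
      first | exact h | exact h.symm | exact h.elim
  loopless := by
    constructor
    rintro ((i | u) | s) h
    · exact (cycleWithTriangles k (fun _ => 1)).loopless.irrefl _ h
    · exact (cycleWithTriangles k (fun _ => 1)).loopless.irrefl _ h
    · exact h rfl

namespace F5proof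
open GridSeg

noncomputable def xlo (s : GridSeg) : ℝ := if s.horiz then (s.lo : ℝ) else (s.coord : ℝ)
noncomputable def xhi (s : GridSeg) : ℝ := if s.horiz then (s.hi : ℝ) else (s.coord : ℝ)
noncomputable def ylo (s : GridSeg) : ℝ := if s.horiz then (s.coord : ℝ) else (s.lo : ℝ)
noncomputable def yhi (s : GridSeg) : ℝ := if s.horiz then (s.coord : ℝ) else (s.hi : ℝ)

lemma cast_lt (s : GridSeg) : (s.lo : ℝ) < (s.hi : ℝ) := by exact_mod_cast s.lt

lemma xlo_le_xhi (s : GridSeg) : xlo s ≤ xhi s := by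
  unfold xlo xhi; split
  · exact (cast_lt s).le
  · exact le_refl _

lemma ylo_le_yhi (s : GridSeg) : ylo s ≤ yhi s := by
  unfold ylo yhi; split
  · exact le_refl _
  · exact (cast_lt s).le

lemma mem_pts_iff {s : GridSeg} {p : ℝ × ℝ} :
    p ∈ s.pts ↔ (xlo s ≤ p.1 ∧ p.1 ≤ xhi s) ∧ (ylo s ≤ p.2 ∧ p.2 ≤ yhi s) := by
  by_cases h : s.horiz
  · simp only [pts, xlo, xhi, ylo, yhi, if_pos h, Set.mem_setOf_eq]
    constructor
    · rintro ⟨h1, h2, h3⟩; exact ⟨⟨h2, h3⟩, le_of_eq h1.symm, le_of_eq h1⟩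
    · rintro ⟨⟨h2, h3⟩, h4, h5⟩; exact ⟨le_antisymm h5 h4, h2, h3⟩
  · simp only [pts, xlo, xhi, ylo, yhi, if_neg h, Set.mem_setOf_eq]
    constructor
    · rintro ⟨h1, h2, h3⟩; exact ⟨⟨le_of_eq h1.symm, le_of_eq h1⟩, h2, h3⟩
    · rintro ⟨⟨h4, h5⟩, h2, h3⟩; exact ⟨le_antisymm h5 h4, h2, h3⟩

lemma interior_subset_pts {s : GridSeg} {p : ℝ × ℝ} (hp : p ∈ s.interior) : p ∈ s.pts := by
  unfold GridSeg.interior at hp; unfold pts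
  by_cases h : s.horiz
  · rw [if_pos h] at hp ⊢; exact ⟨hp.1, hp.2.1.le, hp.2.2.le⟩
  · rw [if_neg h] at hp ⊢; exact ⟨hp.1, hp.2.1.le, hp.2.2.le⟩

lemma ends_subset_pts {s : GridSeg} {p : ℝ × ℝ} (hp : p ∈ s.ends) : p ∈ s.pts := by
  unfold ends at hp; unfold pts
  by_cases h : s.horiz
  · rw [if_pos h] at hp ⊢
    rcases hp with rfl | rfl
    · exact ⟨rfl, le_refl _, (cast_lt s).le⟩
    · exact ⟨rfl, (cast_lt s).le, le_refl _⟩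
  · rw [if_neg h] at hp ⊢
    rcases hp with rfl | rfl
    · exact ⟨rfl, le_refl _, (cast_lt s).le⟩
    · exact ⟨rfl, (cast_lt s).le, le_refl _⟩

lemma mem_ends_or_interior {s : GridSeg} {p : ℝ × ℝ} (hp : p ∈ s.pts) :
    p ∈ s.ends ∨ p ∈ s.interior := by
  unfold pts at hp; unfold ends GridSeg.interior
  by_cases h : s.horiz
  · rw [if_pos h] at hp ⊢; rw [if_pos h]
    obtain ⟨h1, h2, h3⟩ := hp
    rcases h2.lt_or_eq with h2 | h2
    · rcases h3.lt_or_eq with h3 | h3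
      · exact Or.inr ⟨h1, h2, h3⟩
      · exact Or.inl (Or.inr (Prod.ext h3 h1))
    · exact Or.inl (Or.inl (Prod.ext h2.symm h1))
  · rw [if_neg h] at hp ⊢; rw [if_neg h]
    obtain ⟨h1, h2, h3⟩ := hp
    rcases h2.lt_or_eq with h2 | h2
    · rcases h3.lt_or_eq with h3 | h3
      · exact Or.inr ⟨h1, h2, h3⟩
      · exact Or.inl (Or.inr (Prod.ext h1 h3))
    · exact Or.inl (Or.inl (Prod.ext h1 h2.symm))

lemma ends_cases {s : GridSeg} {a b c : ℝ × ℝ} (ha : a ∈ s.ends) (hb : b ∈ s.ends)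
    (hc : c ∈ s.ends) (hab : a ≠ b) : c = a ∨ c = b := by
  unfold ends at ha hb hc
  by_cases h : s.horiz
  · rw [if_pos h] at ha hb hc
    rcases ha with rfl | rfl <;> rcases hb with rfl | rfl <;> rcases hc with h' | h' <;> tauto
  · rw [if_neg h] at ha hb hc
    rcases ha with rfl | rfl <;> rcases hb with rfl | rfl <;> rcases hc with h' | h' <;> tauto

/-- rays at a point -/
noncomputable def ray (s : GridSeg) (p : ℝ × ℝ) : Fin 4 :=
  if s.horiz then (if p.1 < (s.hi : ℝ) then 0 else 1)
  else (if p.2 < (s.hi : ℝ) then 2 else 3)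

lemma pts_unfold_h {s : GridSeg} {p : ℝ × ℝ} (hs : s.horiz = true) (hp : p ∈ s.pts) :
    p.2 = (s.coord : ℝ) ∧ (s.lo : ℝ) ≤ p.1 ∧ p.1 ≤ (s.hi : ℝ) := by
  unfold pts at hp; rwa [hs, if_pos rfl] at hp

lemma pts_unfold_v {s : GridSeg} {p : ℝ × ℝ} (hs : s.horiz = false) (hp : p ∈ s.pts) :
    p.1 = (s.coord : ℝ) ∧ (s.lo : ℝ) ≤ p.2 ∧ p.2 ≤ (s.hi : ℝ) := by
  unfold pts at hp; rw [hs] at hp; rwa [if_neg (by simp)] at hp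

lemma int_unfold_h {s : GridSeg} {q : ℝ × ℝ} (hs : s.horiz = true)
    (h1 : q.2 = (s.coord : ℝ)) (h2 : (s.lo : ℝ) < q.1) (h3 : q.1 < (s.hi : ℝ)) :
    q ∈ s.interior := by
  unfold GridSeg.interior; rw [hs, if_pos rfl]; exact ⟨h1, h2, h3⟩

lemma int_unfold_v {s : GridSeg} {q : ℝ × ℝ} (hs : s.horiz = false)
    (h1 : q.1 = (s.coord : ℝ)) (h2 : (s.lo : ℝ) < q.2) (h3 : q.2 < (s.hi : ℝ)) :
    q ∈ s.interior := by
  unfold GridSeg.interior; rw [hs]; rw [if_neg (by simp)]; exact ⟨h1, h2, h3⟩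

lemma clashR {s t : GridSeg} {p : ℝ × ℝ} (hs : p ∈ s.pts) (ht : p ∈ t.pts)
    (hsh : s.horiz = true) (hth : t.horiz = true)
    (h1 : p.1 < (s.hi : ℝ)) (h2 : p.1 < (t.hi : ℝ)) :
    ¬ Disjoint s.interior t.interior := by
  rw [Set.not_disjoint_iff]
  obtain ⟨hc1, hl1, _⟩ := pts_unfold_h hsh hs
  obtain ⟨hc2, hl2, _⟩ := pts_unfold_h hth ht
  have hm : p.1 < min (s.hi : ℝ) (t.hi : ℝ) := lt_min h1 h2
  refine ⟨((p.1 + min (s.hi : ℝ) (t.hi : ℝ)) / 2, (s.coord : ℝ)), ?_, ?_⟩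
  · exact int_unfold_h hsh rfl (by linarith) (by have := min_le_left (s.hi:ℝ) (t.hi:ℝ); linarith)
  · exact int_unfold_h hth (by rw [← hc1, hc2]) (by linarith)
      (by have := min_le_right (s.hi:ℝ) (t.hi:ℝ); linarith)

lemma clashL {s t : GridSeg} {p : ℝ × ℝ} (hs : p ∈ s.pts) (ht : p ∈ t.pts)
    (hsh : s.horiz = true) (hth : t.horiz = true)
    (h1 : (s.lo : ℝ) < p.1) (h2 : (t.lo : ℝ) < p.1) :
    ¬ Disjoint s.interior t.interior := by
  rw [Set.not_disjoint_iff]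
  obtain ⟨hc1, _, hr1⟩ := pts_unfold_h hsh hs
  obtain ⟨hc2, _, hr2⟩ := pts_unfold_h hth ht
  have hm : max (s.lo : ℝ) (t.lo : ℝ) < p.1 := max_lt h1 h2
  refine ⟨((max (s.lo : ℝ) (t.lo : ℝ) + p.1) / 2, (s.coord : ℝ)), ?_, ?_⟩
  · exact int_unfold_h hsh rfl (by have := le_max_left (s.lo:ℝ) (t.lo:ℝ); linarith)
      (by linarith)
  · exact int_unfold_h hth (by rw [← hc1, hc2])
      (by have := le_max_right (s.lo:ℝ) (t.lo:ℝ); linarith) (by linarith)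

lemma clashU {s t : GridSeg} {p : ℝ × ℝ} (hs : p ∈ s.pts) (ht : p ∈ t.pts)
    (hsh : s.horiz = false) (hth : t.horiz = false)
    (h1 : p.2 < (s.hi : ℝ)) (h2 : p.2 < (t.hi : ℝ)) :
    ¬ Disjoint s.interior t.interior := by
  rw [Set.not_disjoint_iff]
  obtain ⟨hc1, hl1, _⟩ := pts_unfold_v hsh hs
  obtain ⟨hc2, hl2, _⟩ := pts_unfold_v hth ht
  have hm : p.2 < min (s.hi : ℝ) (t.hi : ℝ) := lt_min h1 h2
  refine ⟨((s.coord : ℝ), (p.2 + min (s.hi : ℝ) (t.hi : ℝ)) / 2), ?_, ?_⟩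
  · exact int_unfold_v hsh rfl (by linarith) (by have := min_le_left (s.hi:ℝ) (t.hi:ℝ); linarith)
  · exact int_unfold_v hth (by rw [← hc1, hc2]) (by linarith)
      (by have := min_le_right (s.hi:ℝ) (t.hi:ℝ); linarith)

lemma clashD {s t : GridSeg} {p : ℝ × ℝ} (hs : p ∈ s.pts) (ht : p ∈ t.pts)
    (hsh : s.horiz = false) (hth : t.horiz = false)
    (h1 : (s.lo : ℝ) < p.2) (h2 : (t.lo : ℝ) < p.2) :
    ¬ Disjoint s.interior t.interior := by
  rw [Set.not_disjoint_iff]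
  obtain ⟨hc1, _, hr1⟩ := pts_unfold_v hsh hs
  obtain ⟨hc2, _, hr2⟩ := pts_unfold_v hth ht
  have hm : max (s.lo : ℝ) (t.lo : ℝ) < p.2 := max_lt h1 h2
  refine ⟨((s.coord : ℝ), (max (s.lo : ℝ) (t.lo : ℝ) + p.2) / 2), ?_, ?_⟩
  · exact int_unfold_v hsh rfl (by have := le_max_left (s.lo:ℝ) (t.lo:ℝ); linarith)
      (by linarith)
  · exact int_unfold_v hth (by rw [← hc1, hc2])
      (by have := le_max_right (s.lo:ℝ) (t.lo:ℝ); linarith) (by linarith)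

lemma ray_clash {s t : GridSeg} {p : ℝ × ℝ} (hs : p ∈ s.pts) (ht : p ∈ t.pts)
    (h : ray s p = ray t p) : ¬ Disjoint s.interior t.interior := by
  unfold ray at h
  by_cases hsh : s.horiz <;> by_cases hth : t.horiz
  · rw [if_pos hsh, if_pos hth] at h
    have hsh' : s.horiz = true := hsh
    have hth' : t.horiz = true := hth
    split_ifs at h with a1 a2 a2
    · exact clashR hs ht hsh' hth' a1 a2
    · exact absurd h (by decide)
    · exact absurd h (by decide)
    · obtain ⟨_, _, e1⟩ := pts_unfold_h hsh' hs
      obtain ⟨_, _, e2⟩ := pts_unfold_h hth' ht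
      have c1 : (s.lo : ℝ) < p.1 := lt_of_lt_of_le (cast_lt s) (le_of_not_gt a1) |>.trans_le (le_refl _)
      have c2 : (t.lo : ℝ) < p.1 := lt_of_lt_of_le (cast_lt t) (le_of_not_gt a2)
      exact clashL hs ht hsh' hth' c1 c2
  · rw [if_pos hsh, if_neg hth] at h
    split_ifs at h <;> exact absurd h (by decide)
  · rw [if_neg hsh, if_pos hth] at h
    split_ifs at h <;> exact absurd h (by decide)
  · rw [if_neg hsh, if_neg hth] at h
    have hsh' : s.horiz = false := by simpa using hsh
    have hth' : t.horiz = false := by simpa using hth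
    split_ifs at h with a1 a2 a2
    · exact clashU hs ht hsh' hth' a1 a2
    · exact absurd h (by decide)
    · exact absurd h (by decide)
    · have c1 : (s.lo : ℝ) < p.2 := lt_of_lt_of_le (cast_lt s) (le_of_not_gt a1)
      have c2 : (t.lo : ℝ) < p.2 := lt_of_lt_of_le (cast_lt t) (le_of_not_gt a2)
      exact clashD hs ht hsh' hth' c1 c2

lemma five_seg {s0 s1 s2 s3 s4 : GridSeg} {p : ℝ × ℝ}
    (hp0 : p ∈ s0.pts) (hp1 : p ∈ s1.pts) (hp2 : p ∈ s2.pts) (hp3 : p ∈ s3.pts)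
    (hp4 : p ∈ s4.pts)
    (h01 : Disjoint s0.interior s1.interior) (h02 : Disjoint s0.interior s2.interior)
    (h03 : Disjoint s0.interior s3.interior) (h04 : Disjoint s0.interior s4.interior)
    (h12 : Disjoint s1.interior s2.interior) (h13 : Disjoint s1.interior s3.interior)
    (h14 : Disjoint s1.interior s4.interior) (h23 : Disjoint s2.interior s3.interior)
    (h24 : Disjoint s2.interior s4.interior) (h34 : Disjoint s3.interior s4.interior) :
    False := by
  have key : ∀ {a b : GridSeg}, p ∈ a.pts → p ∈ b.pts → Disjoint a.interior b.interior →
      (ray a p).1 ≠ (ray b p).1 := fun ha hb hd hr => ray_clash ha hb (Fin.ext hr) hd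
  have k01 := key hp0 hp1 h01
  have k02 := key hp0 hp2 h02
  have k03 := key hp0 hp3 h03
  have k04 := key hp0 hp4 h04
  have k12 := key hp1 hp2 h12
  have k13 := key hp1 hp3 h13
  have k14 := key hp1 hp4 h14
  have k23 := key hp2 hp3 h23
  have k24 := key hp2 hp4 h24
  have k34 := key hp3 hp4 h34
  have b0 := (ray s0 p).isLt
  have b1 := (ray s1 p).isLt
  have b2 := (ray s2 p).isLt
  have b3 := (ray s3 p).isLt
  have b4 := (ray s4 p).isLt
  omega

lemma ray_eq_one {s : GridSeg} {p : ℝ × ℝ} (h : (ray s p).1 = 1) :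
    s.horiz = true ∧ ¬ p.1 < (s.hi : ℝ) := by
  unfold ray at h
  by_cases hs : s.horiz
  · rw [if_pos hs] at h
    split_ifs at h with h'
    · exact absurd h (by decide)
    · exact ⟨hs, h'⟩
  · rw [if_neg hs] at h
    split_ifs at h <;> exact absurd h (by decide)

lemma ray_eq_three {s : GridSeg} {p : ℝ × ℝ} (h : (ray s p).1 = 3) :
    s.horiz = false ∧ ¬ p.2 < (s.hi : ℝ) := by
  unfold ray at h
  by_cases hs : s.horiz
  · rw [if_pos hs] at h
    split_ifs at h <;> exact absurd h (by decide)
  · rw [if_neg hs] at h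
    split_ifs at h with h'
    · exact absurd h (by decide)
    · exact ⟨by simpa using hs, h'⟩

lemma four_ends {s0 s1 s2 s3 : GridSeg} {p : ℝ × ℝ}
    (hp0 : p ∈ s0.pts) (hp1 : p ∈ s1.pts) (hp2 : p ∈ s2.pts) (hp3 : p ∈ s3.pts)
    (h01 : Disjoint s0.interior s1.interior) (h02 : Disjoint s0.interior s2.interior)
    (h03 : Disjoint s0.interior s3.interior) (h12 : Disjoint s1.interior s2.interior)
    (h13 : Disjoint s1.interior s3.interior) (h23 : Disjoint s2.interior s3.interior) :
    p ∈ s0.ends := by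
  by_contra hne
  have hint : p ∈ s0.interior := (mem_ends_or_interior hp0).resolve_left hne
  have key : ∀ {a b : GridSeg}, p ∈ a.pts → p ∈ b.pts → Disjoint a.interior b.interior →
      (ray a p).1 ≠ (ray b p).1 := fun ha hb hd hr => ray_clash ha hb (Fin.ext hr) hd
  have k01 := key hp0 hp1 h01
  have k02 := key hp0 hp2 h02
  have k03 := key hp0 hp3 h03
  have k12 := key hp1 hp2 h12
  have k13 := key hp1 hp3 h13
  have k23 := key hp2 hp3 h23
  have b0 := (ray s0 p).isLt
  have b1 := (ray s1 p).isLt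
  have b2 := (ray s2 p).isLt
  have b3 := (ray s3 p).isLt
  unfold GridSeg.interior at hint
  by_cases hsh : s0.horiz
  · rw [if_pos hsh] at hint
    obtain ⟨hc, hl, hr⟩ := hint
    have hr0 : (ray s0 p).1 = 0 := by unfold ray; rw [if_pos hsh, if_pos hr]; rfl
    have hone : (ray s1 p).1 = 1 ∨ (ray s2 p).1 = 1 ∨ (ray s3 p).1 = 1 := by omega
    have finish : ∀ {t : GridSeg}, p ∈ t.pts → Disjoint s0.interior t.interior →
        (ray t p).1 = 1 → False := by
      intro t hpt hd h1
      obtain ⟨hth, hlt⟩ := ray_eq_one h1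
      have he : p.1 = (t.hi : ℝ) := le_antisymm (pts_unfold_h hth hpt).2.2 (le_of_not_gt hlt)
      exact clashL hp0 hpt hsh hth hl (he ▸ cast_lt t) hd
    rcases hone with h | h | h
    · exact finish hp1 h01 h
    · exact finish hp2 h02 h
    · exact finish hp3 h03 h
  · have hsh' : s0.horiz = false := by simpa using hsh
    rw [if_neg (by rw [hsh']; simp)] at hint
    obtain ⟨hc, hl, hr⟩ := hint
    have hr0 : (ray s0 p).1 = 2 := by unfold ray; rw [if_neg hsh, if_pos hr]; rfl
    have hone : (ray s1 p).1 = 3 ∨ (ray s2 p).1 = 3 ∨ (ray s3 p).1 = 3 := by omega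
    have finish : ∀ {t : GridSeg}, p ∈ t.pts → Disjoint s0.interior t.interior →
        (ray t p).1 = 3 → False := by
      intro t hpt hd h1
      obtain ⟨hth, hlt⟩ := ray_eq_three h1
      have he : p.2 = (t.hi : ℝ) := le_antisymm (pts_unfold_v hth hpt).2.2 (le_of_not_gt hlt)
      exact clashD hp0 hpt hsh' hth hl (he ▸ cast_lt t) hd
    rcases hone with h | h | h
    · exact finish hp1 h01 h
    · exact finish hp2 h02 h
    · exact finish hp3 h03 h

lemma helly4 {s0 s1 s2 s3 : GridSeg}
    (h01 : ∃ p, p ∈ s0.pts ∧ p ∈ s1.pts) (h02 : ∃ p, p ∈ s0.pts ∧ p ∈ s2.pts)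
    (h03 : ∃ p, p ∈ s0.pts ∧ p ∈ s3.pts) (h12 : ∃ p, p ∈ s1.pts ∧ p ∈ s2.pts)
    (h13 : ∃ p, p ∈ s1.pts ∧ p ∈ s3.pts) (h23 : ∃ p, p ∈ s2.pts ∧ p ∈ s3.pts) :
    ∃ p, p ∈ s0.pts ∧ p ∈ s1.pts ∧ p ∈ s2.pts ∧ p ∈ s3.pts := by
  have key : ∀ {a b : GridSeg}, (∃ p, p ∈ a.pts ∧ p ∈ b.pts) →
      (xlo a ≤ xhi b ∧ xlo b ≤ xhi a) ∧ (ylo a ≤ yhi b ∧ ylo b ≤ yhi a) := by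
    rintro a b ⟨p, hpa, hpb⟩
    rw [mem_pts_iff] at hpa hpb
    exact ⟨⟨hpa.1.1.trans hpb.1.2, hpb.1.1.trans hpa.1.2⟩,
      hpa.2.1.trans hpb.2.2, hpb.2.1.trans hpa.2.2⟩
  obtain ⟨⟨x01, x10⟩, y01, y10⟩ := key h01
  obtain ⟨⟨x02, x20⟩, y02, y20⟩ := key h02
  obtain ⟨⟨x03, x30⟩, y03, y30⟩ := key h03
  obtain ⟨⟨x12, x21⟩, y12, y21⟩ := key h12
  obtain ⟨⟨x13, x31⟩, y13, y31⟩ := key h13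
  obtain ⟨⟨x23, x32⟩, y23, y32⟩ := key h23
  refine ⟨(max (max (xlo s0) (xlo s1)) (max (xlo s2) (xlo s3)),
           max (max (ylo s0) (ylo s1)) (max (ylo s2) (ylo s3))), ?_, ?_, ?_, ?_⟩ <;>
    rw [mem_pts_iff] <;>
    refine ⟨⟨?_, ?_⟩, ?_, ?_⟩ <;>
    simp only [max_le_iff, le_max_iff] <;>
    first
      | (left; left; rfl) | (left; right; rfl) | (right; left; rfl) | (right; right; rfl)
      | (refine ⟨⟨?_, ?_⟩, ?_, ?_⟩ <;> first
          | exact xlo_le_xhi _ | exact ylo_le_yhi _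
          | assumption)

def cy {k : ℕ} (i : Fin k) : (Fin k ⊕ Σ i : Fin k, Fin 1 × Fin 3) ⊕ Fin 2 :=
  Sum.inl (Sum.inl i)
def tr {k : ℕ} (i : Fin k) (x : Fin 3) : (Fin k ⊕ Σ i : Fin k, Fin 1 × Fin 3) ⊕ Fin 2 :=
  Sum.inl (Sum.inr ⟨i, (0, x)⟩)
def sv {k : ℕ} (j : Fin 2) : (Fin k ⊕ Σ i : Fin k, Fin 1 × Fin 3) ⊕ Fin 2 :=
  Sum.inr j

variable {k : ℕ}

lemma adj_cy_tr (i : Fin k) (x : Fin 3) : (F5graph k).Adj (cy i) (tr i x) := rfl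

lemma adj_tr_tr (i : Fin k) {x y : Fin 3} (h : x ≠ y) :
    (F5graph k).Adj (tr i x) (tr i y) := ⟨rfl, rfl, h⟩

lemma adj_cy_sv {i : Fin k} (h : i.1 = 0 ∨ i.1 = 1) (j : Fin 2) :
    (F5graph k).Adj (cy i) (sv j) := h

lemma adj_sv_sv {j j' : Fin 2} (h : j ≠ j') : (F5graph k).Adj (sv j : _) (sv j') := h

lemma not_adj_cy_tr {i j : Fin k} (h : i ≠ j) (x : Fin 3) :
    ¬ (F5graph k).Adj (cy i) (tr j x) := fun hh => h hh

lemma not_adj_cy_sv {i : Fin k} (h0 : i.1 ≠ 0) (h1 : i.1 ≠ 1) (j : Fin 2) :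
    ¬ (F5graph k).Adj (cy i) (sv j) := fun hh => hh.elim h0 h1

lemma not_adj_tr_sv (i : Fin k) (x : Fin 3) (j : Fin 2) :
    ¬ (F5graph k).Adj (tr i x) (sv j) := fun hh => hh

lemma cycShift_val (hk : 4 ≤ k) (i : Fin k) : (cycShift i 1).1 = (i.1 + 1) % k := by
  unfold cycShift
  rw [Fin.add_def]
  congr 1
  simp [Nat.mod_eq_of_lt (show 1 < k by omega)]

lemma adj_cy_cy' (hk : 4 ≤ k) {a b : ℕ} (ha : a < k) (hb : b < k) :
    (F5graph k).Adj (cy ⟨a, ha⟩) (cy ⟨b, hb⟩) ↔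
      (a + 1 = b ∨ b + 1 = a ∨ (a = 0 ∧ b + 1 = k) ∨ (b = 0 ∧ a + 1 = k)) := by
  have base : (F5graph k).Adj (cy ⟨a, ha⟩) (cy ⟨b, hb⟩) ↔
      ((⟨a, ha⟩ : Fin k) ≠ ⟨b, hb⟩ ∧
        ((⟨a, ha⟩ : Fin k) = cycShift ⟨b, hb⟩ 1 ∨ (⟨b, hb⟩ : Fin k) = cycShift ⟨a, ha⟩ 1)) :=
    Iff.rfl
  rw [base]
  rw [Fin.ne_iff_vne, Fin.ext_iff, Fin.ext_iff, cycShift_val hk, cycShift_val hk]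
  simp only [Fin.val_mk]
  have e1 : (a + 1) % k = if a + 1 = k then 0 else a + 1 := by
    split_ifs with h
    · rw [h, Nat.mod_self]
    · exact Nat.mod_eq_of_lt (by omega)
  have e2 : (b + 1) % k = if b + 1 = k then 0 else b + 1 := by
    split_ifs with h
    · rw [h, Nat.mod_self]
    · exact Nat.mod_eq_of_lt (by omega)
  rw [e1, e2]
  split_ifs <;> omega

lemma cy_ne_cy {a b : ℕ} {ha : a < k} {hb : b < k} (h : a ≠ b) :
    (cy ⟨a, ha⟩ : _) ≠ cy ⟨b, hb⟩ := by
  simp only [cy, ne_eq, Sum.inl.injEq, Fin.mk.injEq]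
  exact h

lemma cy_ne_tr (i j : Fin k) (x : Fin 3) : cy i ≠ tr j x := by simp [cy, tr]

lemma cy_ne_sv (i : Fin k) (j : Fin 2) : cy i ≠ sv j := by simp [cy, sv]

lemma tr_ne_sv (i : Fin k) (x : Fin 3) (j : Fin 2) : tr i x ≠ sv j := by simp [tr, sv]

lemma tr_ne_tr {i : Fin k} {x y : Fin 3} (h : x ≠ y) : tr i x ≠ tr i y := by
  simp only [tr, ne_eq, Sum.inl.injEq, Sum.inr.injEq, Sigma.mk.inj_iff, heq_eq_eq,
    Prod.mk.injEq, true_and]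
  tauto

lemma sv_ne_sv : (sv 0 : (Fin k ⊕ Σ i : Fin k, Fin 1 × Fin 3) ⊕ Fin 2) ≠ sv 1 := by
  simp [sv]

end F5proof

open F5proof

/-- family `F₅`: an even cycle `v_1 … v_k` (`k ≥ 4`) with a triangle
complete to each cycle vertex, plus two adjacent vertices `s, s'` each adjacent to both
`v_1` and `v_2`, all attachment sets pairwise anticomplete, is not contact B₀-VPG. -/
theorem F5_not_contactB0VPG (k : ℕ) (hk : 4 ≤ k) (hke : Even k) :
    ¬ ContactB0VPG (F5graph k) := by
  rintro ⟨f, hdis, hadj⟩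
  have shared : ∀ v w, v ≠ w → (F5graph k).Adj v w →
      ∃ p, p ∈ (f v).pts ∧ p ∈ (f w).pts := by
    intro v w hne ha
    obtain ⟨p, h1, h2, _⟩ := (hadj v w hne).1 ha
    exact ⟨p, h1, h2⟩
  have touch_adj : ∀ v w, v ≠ w → ∀ p : ℝ × ℝ, p ∈ (f v).pts → p ∈ (f w).pts →
      p ∈ (f v).ends → (F5graph k).Adj v w :=
    fun v w hne p h1 h2 h3 => (hadj v w hne).2 ⟨p, h1, h2, Or.inl h3⟩
  have no_int : ∀ v w, v ≠ w → ∀ p : ℝ × ℝ,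
      p ∈ (f v).interior → p ∈ (f w).interior → False :=
    fun v w hne p h1 h2 => Set.disjoint_left.1 (hdis v w hne) h1 h2
  have h0k : (0 : ℕ) < k := by omega
  have h1k : (1 : ℕ) < k := by omega
  -- the triangle attached at each cycle vertex pins down an endpoint
  have triK4 : ∀ i : Fin k, ∃ p : ℝ × ℝ, p ∈ (f (cy i)).pts ∧ p ∈ (f (cy i)).ends ∧
      ∀ w, w ≠ cy i → w ≠ tr i 0 → w ≠ tr i 1 → w ≠ tr i 2 → p ∉ (f w).pts := by
    intro i
    have n01 : (0 : Fin 3) ≠ 1 := by decide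
    have n02 : (0 : Fin 3) ≠ 2 := by decide
    have n12 : (1 : Fin 3) ≠ 2 := by decide
    have d0 : cy i ≠ tr i 0 := cy_ne_tr i i 0
    have d1 : cy i ≠ tr i 1 := cy_ne_tr i i 1
    have d2 : cy i ≠ tr i 2 := cy_ne_tr i i 2
    have d01 : tr i 0 ≠ tr i 1 := tr_ne_tr n01
    have d02 : tr i 0 ≠ tr i 2 := tr_ne_tr n02
    have d12 : tr i 1 ≠ tr i 2 := tr_ne_tr n12
    obtain ⟨p, hp0, hp1, hp2, hp3⟩ := helly4
      (shared _ _ d0 (adj_cy_tr i 0)) (shared _ _ d1 (adj_cy_tr i 1))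
      (shared _ _ d2 (adj_cy_tr i 2)) (shared _ _ d01 (adj_tr_tr i n01))
      (shared _ _ d02 (adj_tr_tr i n02)) (shared _ _ d12 (adj_tr_tr i n12))
    refine ⟨p, hp0, four_ends hp0 hp1 hp2 hp3 (hdis _ _ d0) (hdis _ _ d1) (hdis _ _ d2)
      (hdis _ _ d01) (hdis _ _ d02) (hdis _ _ d12), ?_⟩
    intro w w0 w1 w2 w3 hpw
    exact five_seg hp0 hp1 hp2 hp3 hpw (hdis _ _ d0) (hdis _ _ d1) (hdis _ _ d2)
      (hdis _ _ (Ne.symm w0)) (hdis _ _ d01) (hdis _ _ d02) (hdis _ _ (Ne.symm w1))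
      (hdis _ _ d12) (hdis _ _ (Ne.symm w2)) (hdis _ _ (Ne.symm w3))
  choose P hPmem hPend hPblock using triK4
  -- the K4 on v1, v2, s, s'
  have svK4 : ∃ q : ℝ × ℝ, q ∈ (f (cy (⟨0, h0k⟩ : Fin k))).pts ∧
      q ∈ (f (cy (⟨1, h1k⟩ : Fin k))).pts ∧
      q ∈ (f (cy (⟨0, h0k⟩ : Fin k))).ends ∧ q ∈ (f (cy (⟨1, h1k⟩ : Fin k))).ends ∧
      ∀ w, w ≠ cy ⟨0, h0k⟩ → w ≠ cy ⟨1, h1k⟩ → w ≠ sv 0 → w ≠ sv 1 → q ∉ (f w).pts := by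
    have dcc : (cy (⟨0, h0k⟩ : Fin k) : _) ≠ cy ⟨1, h1k⟩ := cy_ne_cy (by omega)
    have d0s0 : (cy (⟨0, h0k⟩ : Fin k) : _) ≠ sv 0 := cy_ne_sv _ _
    have d0s1 : (cy (⟨0, h0k⟩ : Fin k) : _) ≠ sv 1 := cy_ne_sv _ _
    have d1s0 : (cy (⟨1, h1k⟩ : Fin k) : _) ≠ sv 0 := cy_ne_sv _ _
    have d1s1 : (cy (⟨1, h1k⟩ : Fin k) : _) ≠ sv 1 := cy_ne_sv _ _
    have dss : (sv 0 : _) ≠ (sv 1 : (Fin k ⊕ Σ i : Fin k, Fin 1 × Fin 3) ⊕ Fin 2) :=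
      sv_ne_sv
    have a01 : (F5graph k).Adj (cy ⟨0, h0k⟩) (cy ⟨1, h1k⟩) :=
      (adj_cy_cy' hk h0k h1k).2 (by omega)
    have a0s : ∀ j, (F5graph k).Adj (cy ⟨0, h0k⟩) (sv j) :=
      fun j => adj_cy_sv (Or.inl rfl) j
    have a1s : ∀ j, (F5graph k).Adj (cy ⟨1, h1k⟩) (sv j) :=
      fun j => adj_cy_sv (Or.inr rfl) j
    have ass : (F5graph k).Adj (sv 0) (sv 1) := adj_sv_sv (by decide)
    obtain ⟨q, hq0, hq1, hq2, hq3⟩ := helly4 (shared _ _ dcc a01)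
      (shared _ _ d0s0 (a0s 0)) (shared _ _ d0s1 (a0s 1)) (shared _ _ d1s0 (a1s 0))
      (shared _ _ d1s1 (a1s 1)) (shared _ _ dss ass)
    refine ⟨q, hq0, hq1,
      four_ends hq0 hq1 hq2 hq3 (hdis _ _ dcc) (hdis _ _ d0s0) (hdis _ _ d0s1)
        (hdis _ _ d1s0) (hdis _ _ d1s1) (hdis _ _ dss),
      four_ends hq1 hq0 hq2 hq3 (hdis _ _ dcc.symm) (hdis _ _ d1s0) (hdis _ _ d1s1)
        (hdis _ _ d0s0) (hdis _ _ d0s1) (hdis _ _ dss), ?_⟩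
    intro w w0 w1 w2 w3 hqw
    exact five_seg hq0 hq1 hq2 hq3 hqw (hdis _ _ dcc) (hdis _ _ d0s0) (hdis _ _ d0s1)
      (hdis _ _ (Ne.symm w0)) (hdis _ _ d1s0) (hdis _ _ d1s1) (hdis _ _ (Ne.symm w1))
      (hdis _ _ dss) (hdis _ _ (Ne.symm w2)) (hdis _ _ (Ne.symm w3))
  obtain ⟨q, hq0, hq1, hqe0, hqe1, hqblock⟩ := svK4
  have hPne_q0 : P ⟨0, h0k⟩ ≠ q := by
    intro h
    exact hPblock ⟨0, h0k⟩ (cy ⟨1, h1k⟩) (cy_ne_cy (by omega)) (cy_ne_tr _ _ _)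
      (cy_ne_tr _ _ _) (cy_ne_tr _ _ _) (by rw [h]; exact hq1)
  have hPne_q1 : P ⟨1, h1k⟩ ≠ q := by
    intro h
    exact hPblock ⟨1, h1k⟩ (cy ⟨0, h0k⟩) (cy_ne_cy (by omega)) (cy_ne_tr _ _ _)
      (cy_ne_tr _ _ _) (cy_ne_tr _ _ _) (by rw [h]; exact hq0)
  -- the chain of cycle vertices, each hooking into the interior of the previous one
  have chain : ∀ n, 2 ≤ n → ∀ hn : n < k, ∃ r : ℝ × ℝ,
      r ∈ (f (cy (⟨n, hn⟩ : Fin k))).ends ∧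
      r ∈ (f (cy (⟨n - 1, by omega⟩ : Fin k))).interior := by
    intro n
    induction n with
    | zero => intro h; omega
    | succ m ih =>
      intro h2 hn
      have hmk : m < k := by omega
      have hm1k : m - 1 < k := by omega
      have dnm : (cy (⟨m + 1, hn⟩ : Fin k) : _) ≠ cy ⟨m, hmk⟩ := cy_ne_cy (by omega)
      have anm : (F5graph k).Adj (cy ⟨m + 1, hn⟩) (cy ⟨m, hmk⟩) :=
        (adj_cy_cy' hk hn hmk).2 (by omega)
      obtain ⟨t, hta, htb, hte⟩ := (hadj _ _ dnm).1 anm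
      have killer : t ∈ (f (cy (⟨m, hmk⟩ : Fin k))).ends → False := by
        intro hend
        by_cases hm2 : 2 ≤ m
        · obtain ⟨r, hre, hri⟩ := ih (by omega) hmk
          have hPr : P ⟨m, hmk⟩ ≠ r := by
            intro h
            exact hPblock ⟨m, hmk⟩ (cy ⟨m - 1, hm1k⟩) (cy_ne_cy (by omega)) (cy_ne_tr _ _ _)
              (cy_ne_tr _ _ _) (cy_ne_tr _ _ _) (by rw [h]; exact interior_subset_pts hri)
          rcases ends_cases (hPend ⟨m, hmk⟩) hre hend hPr with h | h
          · exact hPblock ⟨m, hmk⟩ (cy ⟨m + 1, hn⟩) (cy_ne_cy (by omega)) (cy_ne_tr _ _ _)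
              (cy_ne_tr _ _ _) (cy_ne_tr _ _ _) (by rw [← h]; exact hta)
          · have hta' : r ∈ (f (cy (⟨m + 1, hn⟩ : Fin k))).pts := by rw [← h]; exact hta
            have dac : (cy (⟨m + 1, hn⟩ : Fin k) : _) ≠ cy ⟨m - 1, hm1k⟩ :=
              cy_ne_cy (by omega)
            rcases mem_ends_or_interior hta' with h' | h'
            · have := (adj_cy_cy' hk hn hm1k).1
                (touch_adj _ _ dac r hta' (interior_subset_pts hri) h')
              omega
            · exact no_int _ _ dac r h' hri
        · have hm1 : m = 1 := by omega
          subst hm1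
          have hPr : P ⟨1, hmk⟩ ≠ q := hPne_q1
          rcases ends_cases (hPend ⟨1, hmk⟩) hqe1 hend hPr with h | h
          · exact hPblock ⟨1, hmk⟩ (cy ⟨2, hn⟩) (cy_ne_cy (by omega)) (cy_ne_tr _ _ _)
              (cy_ne_tr _ _ _) (cy_ne_tr _ _ _) (by rw [← h]; exact hta)
          · exact hqblock (cy ⟨2, hn⟩) (cy_ne_cy (by omega)) (cy_ne_cy (by omega))
              (cy_ne_sv _ _) (cy_ne_sv _ _) (by rw [← h]; exact hta)
      have htbi : t ∈ (f (cy (⟨m, hmk⟩ : Fin k))).interior :=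
        (mem_ends_or_interior htb).resolve_left killer
      have htae : t ∈ (f (cy (⟨m + 1, hn⟩ : Fin k))).ends := by
        rcases hte with h | h
        · exact h
        · exact absurd h killer
      exact ⟨t, htae, htbi⟩
  -- closing the cycle yields a contradiction
  have hk1 : k - 1 < k := by omega
  have hk2 : k - 1 - 1 < k := by omega
  obtain ⟨r, hre, hri⟩ := chain (k - 1) (by omega) hk1
  have dab : (cy (⟨0, h0k⟩ : Fin k) : _) ≠ cy ⟨k - 1, hk1⟩ := cy_ne_cy (by omega)
  have aab : (F5graph k).Adj (cy ⟨0, h0k⟩) (cy ⟨k - 1, hk1⟩) :=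
    (adj_cy_cy' hk h0k hk1).2 (by omega)
  obtain ⟨t, hta, htb, hte⟩ := (hadj _ _ dab).1 aab
  rcases hte with h | h
  · rcases ends_cases (hPend ⟨0, h0k⟩) hqe0 h hPne_q0 with h' | h'
    · exact hPblock ⟨0, h0k⟩ (cy ⟨k - 1, hk1⟩) (cy_ne_cy (by omega)) (cy_ne_tr _ _ _)
        (cy_ne_tr _ _ _) (cy_ne_tr _ _ _) (by rw [← h']; exact htb)
    · exact hqblock (cy ⟨k - 1, hk1⟩) (cy_ne_cy (by omega)) (cy_ne_cy (by omega))
        (cy_ne_sv _ _) (cy_ne_sv _ _) (by rw [← h']; exact htb)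
  · have hPr : P ⟨k - 1, hk1⟩ ≠ r := by
      intro hh
      exact hPblock ⟨k - 1, hk1⟩ (cy ⟨k - 1 - 1, hk2⟩) (cy_ne_cy (by omega)) (cy_ne_tr _ _ _)
        (cy_ne_tr _ _ _) (cy_ne_tr _ _ _) (by rw [hh]; exact interior_subset_pts hri)
    rcases ends_cases (hPend ⟨k - 1, hk1⟩) hre h hPr with h' | h'
    · exact hPblock ⟨k - 1, hk1⟩ (cy ⟨0, h0k⟩) (cy_ne_cy (by omega)) (cy_ne_tr _ _ _)
        (cy_ne_tr _ _ _) (cy_ne_tr _ _ _) (by rw [← h']; exact hta)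
    · have hta' : r ∈ (f (cy (⟨0, h0k⟩ : Fin k))).pts := by rw [← h']; exact hta
      have dac : (cy (⟨0, h0k⟩ : Fin k) : _) ≠ cy ⟨k - 1 - 1, hk2⟩ := cy_ne_cy (by omega)
      rcases mem_ends_or_interior hta' with h'' | h''
      · have := (adj_cy_cy' hk h0k hk2).1
          (touch_adj _ _ dac r hta' (interior_subset_pts hri) h'')
        omega
      · exact no_int _ _ dac r h'' hri
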